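/- The series transformation preserves the response matrix: Let (G,c) be a network with node set N and internal vertices I, and suppose v₀ ∈ I has exactly two neighbors, the distinct vertices u and w, joined to v₀ by edges of conductances c₁, c₂ > 0. Let (G',c') be the network on vertex set V∖{v₀} obtained by deleting v₀ and its edges and increasing the conductance between u and w by c₁c₂/(c₁+c₂) (adding the edge uw if it was not present). Then G' is connected, and the response matrix of (G',c') with node set N equals the response matrix of (G,c) with node set N. -/

import Mathlib

open Matrix BigOperators

/-- The Laplacian of a network given by a symmetric conductance function `c`
(zero on the diagonal and on non-edges): `Δ v v' = -c v v'` off the diagonal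
and `Δ v v = ∑_{v'} c v v'` on the diagonal. -/
noncomputable def netLap {V : Type*} [Fintype V] [DecidableEq V] (c : V → V → ℝ) :
    Matrix V V ℝ :=
  Matrix.of fun v w => if v = w then ∑ u, c v u else -c v w

/-- The response matrix `L = -A + B C⁻¹ Bᵀ` of a network with node set `N`. -/
noncomputable def respMat {V : Type*} [Fintype V] [DecidableEq V]
    (c : V → V → ℝ) (N : Finset V) : Matrix {v : V // v ∈ N} {v : V // v ∈ N} ℝ :=
  -(netLap c).submatrix (Subtype.val : {v : V // v ∈ N} → V)
      (Subtype.val : {v : V // v ∈ N} → V)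
    + (netLap c).submatrix (Subtype.val : {v : V // v ∈ N} → V)
        (Subtype.val : {v : V // v ∉ N} → V)
      * ((netLap c).submatrix (Subtype.val : {v : V // v ∉ N} → V)
          (Subtype.val : {v : V // v ∉ N} → V))⁻¹
      * ((netLap c).submatrix (Subtype.val : {v : V // v ∈ N} → V)
          (Subtype.val : {v : V // v ∉ N} → V))ᵀ

section AuxA
variable {V : Type*} [Fintype V] [DecidableEq V]

lemma netLap_symm (c : V → V → ℝ) (hsymm : ∀ v w, c v w = c w v) (v w : V) :
    netLap c v w = netLap c w v := by
  by_cases h : v = w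
  · subst h; rfl
  · simp [netLap, h, Ne.symm h, hsymm v w]

lemma netLap_mulVec (c : V → V → ℝ) (hdiag : ∀ v, c v v = 0) (h : V → ℝ) (v : V) :
    (netLap c *ᵥ h) v = ∑ u, c v u * (h v - h u) := by
  have hent : ∀ u : V, netLap c v u = (if v = u then ∑ w, c v w else 0) - c v u := by
    intro u
    by_cases hvu : v = u
    · subst hvu; simp [netLap, hdiag v]
    · simp [netLap, hvu]
  simp only [mulVec, dotProduct, hent, sub_mul, ite_mul, zero_mul, mul_sub]
  rw [Finset.sum_sub_distrib, Finset.sum_sub_distrib, Finset.sum_ite_eq,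
    if_pos (Finset.mem_univ v), Finset.sum_mul]

lemma mulVec_split (c : V → V → ℝ) (N : Finset V) (h : V → ℝ) (v : V) :
    (netLap c *ᵥ h) v
      = (∑ u : {u : V // u ∈ N}, netLap c v u.val * h u.val)
        + ∑ u : {u : V // u ∉ N}, netLap c v u.val * h u.val := by
  simp only [mulVec, dotProduct]
  convert (Fintype.sum_subtype_add_sum_subtype (· ∈ N) fun u => netLap c v u * h u).symm using 2 <;> congr!

omit [Fintype V] [DecidableEq V] in
lemma const_of_reachable {G : SimpleGraph V} {f : V → ℝ}
    (hf : ∀ a b, G.Adj a b → f a = f b) {v w : V} (h : G.Reachable v w) : f v = f w := by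
  obtain ⟨p⟩ := h
  induction p with
  | nil => rfl
  | cons ha _ ih => exact (hf _ _ ha).trans ih

lemma dirichlet_posdef (c : V → V → ℝ) (N : Finset V)
    (hsymm : ∀ v w, c v w = c w v) (hnonneg : ∀ v w, 0 ≤ c v w) (hdiag : ∀ v, c v v = 0)
    (hconn : (SimpleGraph.fromRel fun v w : V => c v w ≠ 0).Connected)
    (hN : N.Nonempty) :
    ((netLap c).submatrix (Subtype.val : {v : V // v ∉ N} → V) Subtype.val).PosDef := by
  rw [Matrix.posDef_iff_dotProduct_mulVec]
  constructor
  · show _ᴴ = _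
    ext i j
    simp only [conjTranspose_apply, submatrix_apply, star_trivial]
    exact netLap_symm c hsymm j.val i.val
  · intro x hx
    set f : V → ℝ := fun v => if hv : v ∉ N then x ⟨v, hv⟩ else 0 with hfdef
    have hfN : ∀ v : V, v ∈ N → f v = 0 := fun v hv => dif_neg (not_not_intro hv)
    have hfK : ∀ (v : V) (hv : v ∉ N), f v = x ⟨v, hv⟩ := fun v hv => dif_pos hv
    have hmv : ∀ v : V, (netLap c *ᵥ f) v
        = ∑ u : {u : V // u ∉ N}, netLap c v u.val * x u := by
      intro v
      rw [mulVec_split c N f v,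
        Finset.sum_eq_zero (fun u _ => by rw [hfN u.val u.prop, mul_zero]), zero_add]
      exact Finset.sum_congr rfl fun u _ => by rw [hfK u.val u.prop]
    have h1 : f ⬝ᵥ (netLap c *ᵥ f)
        = x ⬝ᵥ ((netLap c).submatrix (Subtype.val : {v : V // v ∉ N} → V) Subtype.val *ᵥ x) := by
      rw [dotProduct,
        ← Fintype.sum_subtype_add_sum_subtype (· ∈ N) (fun v => f v * (netLap c *ᵥ f) v),
        Finset.sum_eq_zero (fun v _ => by rw [hfN v.val v.prop, zero_mul]), zero_add,
        dotProduct]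
      refine Finset.sum_congr rfl fun v _ => ?_
      rw [hfK v.val v.prop, hmv]
      simp [mulVec, dotProduct, submatrix_apply]
    have h2 : f ⬝ᵥ (netLap c *ᵥ f) = ∑ v, ∑ u, c v u * (f v * f v - f v * f u) := by
      rw [dotProduct]
      refine Finset.sum_congr rfl fun v _ => ?_
      rw [netLap_mulVec c hdiag, Finset.mul_sum]
      exact Finset.sum_congr rfl fun u _ => by ring
    have hswap : (∑ v, ∑ u, c v u * (f u * f u - f u * f v))
        = ∑ v, ∑ u, c v u * (f v * f v - f v * f u) := by
      rw [Finset.sum_comm]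
      refine Finset.sum_congr rfl fun a _ => Finset.sum_congr rfl fun b _ => ?_
      rw [hsymm b a]
    have h4 : 2 * (f ⬝ᵥ (netLap c *ᵥ f)) = ∑ v, ∑ u, c v u * (f v - f u) ^ 2 := by
      rw [two_mul, h2]
      nth_rewrite 2 [← hswap]
      rw [← Finset.sum_add_distrib]
      refine Finset.sum_congr rfl fun v _ => ?_
      rw [← Finset.sum_add_distrib]
      exact Finset.sum_congr rfl fun u _ => by ring
    have hterm_nonneg : ∀ v ∈ Finset.univ, (0:ℝ) ≤ ∑ u, c v u * (f v - f u) ^ 2 :=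
      fun v _ => Finset.sum_nonneg fun u _ => mul_nonneg (hnonneg v u) (sq_nonneg _)
    have hQnn : 0 ≤ f ⬝ᵥ (netLap c *ᵥ f) := by
      nlinarith [Finset.sum_nonneg hterm_nonneg, h4]
    have hQne : f ⬝ᵥ (netLap c *ᵥ f) ≠ 0 := by
      intro h0
      apply hx
      have hall : ∀ v u : V, c v u * (f v - f u) ^ 2 = 0 := by
        have hz : ∑ v, ∑ u, c v u * (f v - f u) ^ 2 = 0 := by rw [← h4, h0, mul_zero]
        have hz2 := (Finset.sum_eq_zero_iff_of_nonneg hterm_nonneg).mp hz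
        intro v u
        have := (Finset.sum_eq_zero_iff_of_nonneg
          (fun u _ => mul_nonneg (hnonneg v u) (sq_nonneg _))).mp (hz2 v (Finset.mem_univ v))
        exact this u (Finset.mem_univ u)
      have hedge : ∀ a b : V, (SimpleGraph.fromRel fun v w : V => c v w ≠ 0).Adj a b →
          f a = f b := by
        intro a b hab
        rw [SimpleGraph.fromRel_adj] at hab
        obtain ⟨-, hc⟩ := hab
        have hcab : c a b ≠ 0 := by
          rcases hc with h | h
          · exact h
          · rw [hsymm a b]; exact h
        have := hall a b
        have h2 : (f a - f b) ^ 2 = 0 := by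
          rcases mul_eq_zero.mp this with h | h
          · exact absurd h hcab
          · exact h
        have := pow_eq_zero_iff (n := 2) (by norm_num) |>.mp h2
        linarith [sub_eq_zero.mp this]
      obtain ⟨n₀, hn₀⟩ := hN
      have hf0 : ∀ v : V, f v = 0 := by
        intro v
        have hr := hconn.preconnected v n₀
        rw [const_of_reachable hedge hr]
        exact hfN n₀ hn₀
      funext k
      have := hf0 k.val
      rw [hfK k.val k.prop] at this
      exact this
    have hstar : star x ⬝ᵥ ((netLap c).submatrix
        (Subtype.val : {v : V // v ∉ N} → V) Subtype.val *ᵥ x)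
        = f ⬝ᵥ (netLap c *ᵥ f) := by
      rw [h1]; congr 1
    rw [hstar]
    exact lt_of_le_of_ne hQnn (Ne.symm hQne)

end AuxA
section Aux2
variable {V : Type*} [Fintype V] [DecidableEq V]

lemma netLap_symm' (c : V → V → ℝ) (hsymm : ∀ v w, c v w = c w v) (v w : V) :
    netLap c v w = netLap c w v := by
  by_cases h : v = w
  · subst h; rfl
  · simp [netLap, h, Ne.symm h, hsymm v w]

lemma mulVec_split' (c : V → V → ℝ) (N : Finset V) (h : V → ℝ) (v : V) :
    (netLap c *ᵥ h) v
      = (∑ u : {u : V // u ∈ N}, netLap c v u.val * h u.val)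
        + ∑ u : {u : V // u ∉ N}, netLap c v u.val * h u.val := by
  simp only [mulVec, dotProduct]
  convert (Fintype.sum_subtype_add_sum_subtype (· ∈ N) fun u => netLap c v u * h u).symm
      using 2 <;> congr!

lemma respMat_apply (c : V → V → ℝ) (N : Finset V)
    (hsymm : ∀ v w, c v w = c w v)
    (hdet : IsUnit ((netLap c).submatrix
        (Subtype.val : {v : V // v ∉ N} → V) Subtype.val).det)
    (h : V → ℝ) (hharm : ∀ v, v ∉ N → (netLap c *ᵥ h) v = 0) (i : {v : V // v ∈ N}) :
    (respMat c N *ᵥ fun k : {v : V // v ∈ N} => h k.val) i = -(netLap c *ᵥ h) i.val := by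
  set A := (netLap c).submatrix (Subtype.val : {v : V // v ∈ N} → V)
      (Subtype.val : {v : V // v ∈ N} → V) with hA
  set B := (netLap c).submatrix (Subtype.val : {v : V // v ∈ N} → V)
      (Subtype.val : {v : V // v ∉ N} → V) with hB
  set C := (netLap c).submatrix (Subtype.val : {v : V // v ∉ N} → V)
      (Subtype.val : {v : V // v ∉ N} → V) with hC
  set f : {v : V // v ∈ N} → ℝ := fun k => h k.val with hf
  set hI : {v : V // v ∉ N} → ℝ := fun k => h k.val with hIdef
  have hBt : Bᵀ *ᵥ f = fun v : {v : V // v ∉ N} =>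
      ∑ u : {u : V // u ∈ N}, netLap c v.val u.val * h u.val := by
    funext v
    simp only [mulVec, dotProduct, transpose_apply, hB, submatrix_apply]
    exact Finset.sum_congr rfl fun u _ => by rw [netLap_symm' c hsymm u.val v.val]
  have hCmv : C *ᵥ hI = fun v : {v : V // v ∉ N} =>
      ∑ u : {u : V // u ∉ N}, netLap c v.val u.val * h u.val := by
    funext v; simp only [mulVec, dotProduct, hC, submatrix_apply]; rfl
  have hkey : Bᵀ *ᵥ f = -(C *ᵥ hI) := by
    funext v
    have := hharm v.val v.prop
    rw [mulVec_split' c N h v.val] at this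
    rw [hBt, hCmv]
    simp only [Pi.neg_apply]
    linarith
  have hinv : C⁻¹ *ᵥ (Bᵀ *ᵥ f) = -hI := by
    rw [hkey, mulVec_neg, mulVec_mulVec, Matrix.nonsing_inv_mul C hdet, one_mulVec]
  have hsplit := mulVec_split' c N h i.val
  have hAf : (A *ᵥ f) i = ∑ u : {u : V // u ∈ N}, netLap c i.val u.val * h u.val := by
    simp only [mulVec, dotProduct, hA, submatrix_apply]; rfl
  have hBh : (B *ᵥ hI) i = ∑ u : {u : V // u ∉ N}, netLap c i.val u.val * h u.val := by
    simp only [mulVec, dotProduct, hB, submatrix_apply]; rfl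
  have : (respMat c N *ᵥ f) i = -(A *ᵥ f) i - (B *ᵥ hI) i := by
    show ((-A + B * C⁻¹ * Bᵀ) *ᵥ f) i = _
    rw [add_mulVec, neg_mulVec, Matrix.mul_assoc, ← mulVec_mulVec, ← mulVec_mulVec, hinv,
      mulVec_neg]
    simp only [Pi.add_apply, Pi.neg_apply]
    ring
  rw [this, hsplit, hAf, hBh]
  ring

lemma exists_harmonic (c : V → V → ℝ) (N : Finset V)
    (hdet : IsUnit ((netLap c).submatrix
        (Subtype.val : {v : V // v ∉ N} → V) Subtype.val).det)
    (f : {v : V // v ∈ N} → ℝ) :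
    ∃ h : V → ℝ, (∀ k : {v : V // v ∈ N}, h k.val = f k) ∧
      ∀ v, v ∉ N → (netLap c *ᵥ h) v = 0 := by
  set C := (netLap c).submatrix (Subtype.val : {v : V // v ∉ N} → V)
      (Subtype.val : {v : V // v ∉ N} → V) with hC
  set D := (netLap c).submatrix (Subtype.val : {v : V // v ∉ N} → V)
      (Subtype.val : {v : V // v ∈ N} → V) with hD
  set g : {v : V // v ∉ N} → ℝ := (-(C⁻¹ * D)) *ᵥ f with hg
  refine ⟨fun v => if hv : v ∈ N then f ⟨v, hv⟩ else g ⟨v, hv⟩, fun k => dif_pos k.prop, ?_⟩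
  intro v hv
  set h : V → ℝ := fun v => if hv : v ∈ N then f ⟨v, hv⟩ else g ⟨v, hv⟩ with hh
  rw [mulVec_split' c N h v]
  have h1 : (∑ u : {u : V // u ∈ N}, netLap c v u.val * h u.val) = (D *ᵥ f) ⟨v, hv⟩ := by
    simp only [mulVec, dotProduct, hD, submatrix_apply]
    exact Finset.sum_congr rfl fun u _ => by rw [hh]; simp [dif_pos u.prop]
  have h2 : (∑ u : {u : V // u ∉ N}, netLap c v u.val * h u.val) = (C *ᵥ g) ⟨v, hv⟩ := by
    simp only [mulVec, dotProduct, hC, submatrix_apply]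
    exact Finset.sum_congr rfl fun u _ => by rw [hh]; simp [dif_neg u.prop]
  rw [h1, h2, hg, mulVec_mulVec, Matrix.mul_neg, ← Matrix.mul_assoc,
    Matrix.mul_nonsing_inv C hdet, Matrix.one_mul, neg_mulVec]
  simp
end Aux2

/-- The series transformation preserves the response matrix: if the internal vertex `v₀`
has exactly the two distinct neighbors `u₀, w₀` with conductances `c₁ = c v₀ u₀` and
`c₂ = c v₀ w₀`, then deleting `v₀` (and its edges) and increasing the conductance
between `u₀` and `w₀` by `c₁c₂/(c₁+c₂)` yields a connected network with the same
response matrix on the node set `N`. -/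
theorem series_preserves_response {V : Type*} [Fintype V] [DecidableEq V]
    (c : V → V → ℝ) (N : Finset V)
    (hsymm : ∀ v w, c v w = c w v)
    (hnonneg : ∀ v w, 0 ≤ c v w)
    (hdiag : ∀ v, c v v = 0)
    (hconn : (SimpleGraph.fromRel fun v w : V => c v w ≠ 0).Connected)
    (hN : N.Nonempty)
    (v₀ u₀ w₀ : V) (hv₀ : v₀ ∉ N)
    (h0u : v₀ ≠ u₀) (h0w : v₀ ≠ w₀) (huw : u₀ ≠ w₀)
    (hc1 : 0 < c v₀ u₀) (hc2 : 0 < c v₀ w₀)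
    (hnbr : ∀ u : V, c v₀ u ≠ 0 → u = u₀ ∨ u = w₀) :
    let c' : {v : V // v ≠ v₀} → {v : V // v ≠ v₀} → ℝ := fun x y =>
      c x.val y.val +
        (if ({x.val, y.val} : Finset V) = {u₀, w₀} then
          c v₀ u₀ * c v₀ w₀ / (c v₀ u₀ + c v₀ w₀)
         else 0)
    let N' : Finset {v : V // v ≠ v₀} := N.subtype (fun v => v ≠ v₀)
    (SimpleGraph.fromRel fun x y : {v : V // v ≠ v₀} => c' x y ≠ 0).Connected ∧
    ∀ i j : {v : V // v ∈ N},
      respMat c' N'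
        ⟨⟨i.val, fun h => hv₀ (h ▸ i.property)⟩, Finset.mem_subtype.mpr i.property⟩
        ⟨⟨j.val, fun h => hv₀ (h ▸ j.property)⟩, Finset.mem_subtype.mpr j.property⟩
      = respMat c N i j := by
  intro c' N'
  have hu₀ : u₀ ≠ v₀ := Ne.symm h0u
  have hw₀ : w₀ ≠ v₀ := Ne.symm h0w
  set γ : ℝ := c v₀ u₀ * c v₀ w₀ / (c v₀ u₀ + c v₀ w₀) with hγdef
  have hγ : 0 < γ := div_pos (mul_pos hc1 hc2) (add_pos hc1 hc2)
  have hsum : c v₀ u₀ + c v₀ w₀ ≠ 0 := (add_pos hc1 hc2).ne'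
  have hc'val : ∀ x y : {v : V // v ≠ v₀}, c' x y
      = c x.val y.val + (if ({x.val, y.val} : Finset V) = {u₀, w₀} then γ else 0) :=
    fun x y => rfl
  have hsym' : ∀ x y, c' x y = c' y x := by
    intro x y
    rw [hc'val, hc'val, hsymm x.val y.val, Finset.pair_comm x.val y.val]
  have hnotpair : ∀ x : V, ({x, x} : Finset V) ≠ {u₀, w₀} := by
    intro x hx
    have hu : u₀ ∈ ({x, x} : Finset V) := hx ▸ Finset.mem_insert_self u₀ {w₀}
    have hw : w₀ ∈ ({x, x} : Finset V) := hx ▸ Finset.mem_insert_of_mem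
      (Finset.mem_singleton_self w₀)
    simp only [Finset.mem_insert, Finset.mem_singleton, or_self] at hu hw
    exact huw (hu.trans hw.symm)
  have hdiag' : ∀ x, c' x x = 0 := by
    intro x; rw [hc'val, if_neg (hnotpair x.val), hdiag, add_zero]
  have hnonneg' : ∀ x y, 0 ≤ c' x y := by
    intro x y; rw [hc'val]
    exact add_nonneg (hnonneg _ _) (by split_ifs; exacts [hγ.le, le_rfl])
  have hc'pos : ∀ x y : {v : V // v ≠ v₀}, c x.val y.val ≠ 0 → c' x y ≠ 0 := by
    intro x y hc; rw [hc'val]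
    have h1 : 0 < c x.val y.val := (hnonneg _ _).lt_of_ne (Ne.symm hc)
    exact (add_pos_of_pos_of_nonneg h1 (by split_ifs; exacts [hγ.le, le_rfl])).ne'
  have hpair_eq : ∀ a b : V, (a = u₀ ∨ a = w₀) → (b = u₀ ∨ b = w₀) → a ≠ b →
      ({a, b} : Finset V) = {u₀, w₀} := by
    rintro a b (rfl | rfl) (rfl | rfl) hab
    · exact absurd rfl hab
    · rfl
    · exact Finset.pair_comm _ _
    · exact absurd rfl hab
  have hadj_c : ∀ a b : V, (SimpleGraph.fromRel fun v w : V => c v w ≠ 0).Adj a b →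
      a ≠ b ∧ c a b ≠ 0 := by
    intro a b hab
    rw [SimpleGraph.fromRel_adj] at hab
    refine ⟨hab.1, ?_⟩
    rcases hab.2 with h | h
    · exact h
    · rw [hsymm a b]; exact h
  have hadj' : ∀ a b : {v : V // v ≠ v₀}, c' a b ≠ 0 → a ≠ b →
      (SimpleGraph.fromRel fun x y : {v : V // v ≠ v₀} => c' x y ≠ 0).Adj a b :=
    fun a b h hne => (SimpleGraph.fromRel_adj _ a b).mpr ⟨hne, Or.inl h⟩
  have hreach : ∀ (n : ℕ) (a b : V) (ha : a ≠ v₀) (hb : b ≠ v₀)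
      (p : (SimpleGraph.fromRel fun v w : V => c v w ≠ 0).Walk a b), p.length ≤ n →
      (SimpleGraph.fromRel fun x y : {v : V // v ≠ v₀} => c' x y ≠ 0).Reachable
        ⟨a, ha⟩ ⟨b, hb⟩ := by
    intro n
    induction n with
    | zero =>
      intro a b ha hb p hp
      have hab : a = b := p.eq_of_length_eq_zero (Nat.le_zero.mp hp)
      subst hab
      exact SimpleGraph.Reachable.refl _
    | succ n IH =>
      intro a b ha hb p hp
      cases p with
      | nil => exact SimpleGraph.Reachable.refl _
      | @cons _ z _ hadj q =>
        rw [SimpleGraph.Walk.length_cons] at hp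
        by_cases hz : z = v₀
        · cases q with
          | nil => exact absurd hz hb
          | @cons _ z₂ _ hadj₂ r =>
            rw [SimpleGraph.Walk.length_cons] at hp
            have haz : c a z ≠ 0 := (hadj_c _ _ hadj).2
            have ha2 : a = u₀ ∨ a = w₀ := hnbr a (by rw [hsymm v₀ a, ← hz]; exact haz)
            have hz₂v : z₂ ≠ v₀ := fun hh => hadj₂.ne (hz.trans hh.symm)
            have hz2 : z₂ = u₀ ∨ z₂ = w₀ :=
              hnbr z₂ (by rw [← hz]; exact (hadj_c _ _ hadj₂).2)
            have step1 : (SimpleGraph.fromRel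
                fun x y : {v : V // v ≠ v₀} => c' x y ≠ 0).Reachable ⟨a, ha⟩ ⟨z₂, hz₂v⟩ := by
              by_cases haz₂ : a = z₂
              · subst haz₂; exact SimpleGraph.Reachable.refl _
              · refine (hadj' _ _ ?_ ?_).reachable
                · rw [hc'val]
                  simp only
                  rw [if_pos (hpair_eq a z₂ ha2 hz2 haz₂)]
                  exact (add_pos_of_nonneg_of_pos (hnonneg _ _) hγ).ne'
                · exact fun h => haz₂ (congrArg Subtype.val h)
            exact step1.trans (IH z₂ b hz₂v hb r (by omega))
        · have hcz : c a z ≠ 0 := (hadj_c _ _ hadj).2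
          have step1 := hadj' ⟨a, ha⟩ ⟨z, hz⟩ (hc'pos _ _ hcz)
            (fun h => (hadj_c _ _ hadj).1 (congrArg Subtype.val h))
          exact step1.reachable.trans (IH z b hz hb q (by omega))
  have hconn' : (SimpleGraph.fromRel
      fun x y : {v : V // v ≠ v₀} => c' x y ≠ 0).Connected := by
    have hne : Nonempty {v : V // v ≠ v₀} := ⟨⟨u₀, hu₀⟩⟩
    refine ⟨fun x y => ?_⟩
    obtain ⟨p⟩ := hconn.preconnected x.val y.val
    exact hreach p.length x.val y.val x.prop y.prop p le_rfl
  have hN' : N'.Nonempty := by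
    obtain ⟨n, hn⟩ := hN
    exact ⟨⟨n, fun h => hv₀ (h ▸ hn)⟩, Finset.mem_subtype.mpr hn⟩
  have hdet : IsUnit ((netLap c).submatrix
      (Subtype.val : {v : V // v ∉ N} → V) Subtype.val).det :=
    (dirichlet_posdef c N hsymm hnonneg hdiag hconn hN).det_pos.ne'.isUnit
  have hdet' : IsUnit ((netLap c').submatrix
      (Subtype.val : {x : {v : V // v ≠ v₀} // x ∉ N'} → {v : V // v ≠ v₀}) Subtype.val).det :=
    (dirichlet_posdef c' N' hsym' hnonneg' hdiag' hconn' hN').det_pos.ne'.isUnit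
  refine ⟨hconn', ?_⟩
  intro i j
  set f : {v : V // v ∈ N} → ℝ := Pi.single j 1 with hfdef
  obtain ⟨h, hres, hharm⟩ := exists_harmonic c N hdet f
  have hharm_v₀ := hharm v₀ hv₀
  rw [netLap_mulVec c hdiag] at hharm_v₀
  have hsupp : ∀ y ∈ Finset.univ, y ∉ ({u₀, w₀} : Finset V) →
      c v₀ y * (h v₀ - h y) = 0 := by
    intro y _ hy
    have hcy : c v₀ y = 0 := by
      by_contra hcy
      rcases hnbr y hcy with rfl | rfl
      · exact hy (Finset.mem_insert_self _ _)
      · exact hy (Finset.mem_insert_of_mem (Finset.mem_singleton_self _))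
    rw [hcy, zero_mul]
  rw [← Finset.sum_subset (Finset.subset_univ ({u₀, w₀} : Finset V)) hsupp,
    Finset.sum_pair huw] at hharm_v₀
  set h' : {v : V // v ≠ v₀} → ℝ := fun x => h x.val with hh'
  have hsubty : ∀ g : V → ℝ, (∑ y : {v : V // v ≠ v₀}, g y.val)
      = ∑ y ∈ Finset.univ.erase v₀, g y := by
    intro g
    exact (Finset.sum_subtype (Finset.univ.erase v₀)
      (fun y => by simp [Finset.mem_erase]) g).symm
  have htrans : ∀ x : {v : V // v ≠ v₀}, (netLap c' *ᵥ h') x = (netLap c *ᵥ h) x.val := by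
    intro x
    rw [netLap_mulVec c' hdiag' h' x, netLap_mulVec c hdiag h x.val]
    have hLHS : (∑ y : {v : V // v ≠ v₀}, c' x y * (h' x - h' y))
        = (∑ y : {v : V // v ≠ v₀}, c x.val y.val * (h x.val - h y.val))
          + ∑ y : {v : V // v ≠ v₀},
              (if ({x.val, y.val} : Finset V) = {u₀, w₀} then γ else 0)
                * (h x.val - h y.val) := by
      rw [← Finset.sum_add_distrib]
      refine Finset.sum_congr rfl fun y _ => ?_
      rw [hc'val]; simp only [hh']; ring
    have hRHS : (∑ y : V, c x.val y * (h x.val - h y))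
        = (∑ y ∈ Finset.univ.erase v₀, c x.val y * (h x.val - h y))
          + c x.val v₀ * (h x.val - h v₀) :=
      (Finset.sum_erase_add _ _ (Finset.mem_univ v₀)).symm
    rw [hLHS, hRHS, hsubty (fun y => c x.val y * (h x.val - h y))]
    congr 1
    by_cases hxu : x.val = u₀
    · have hone : (∑ y : {v : V // v ≠ v₀},
          (if ({x.val, y.val} : Finset V) = {u₀, w₀} then γ else 0) * (h x.val - h y.val))
          = (if ({x.val, w₀} : Finset V) = {u₀, w₀} then γ else 0) * (h x.val - h w₀) := by
        refine Finset.sum_eq_single (⟨w₀, hw₀⟩ : {v : V // v ≠ v₀}) ?_ ?_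
        · intro y _ hy
          rw [if_neg, zero_mul]
          intro hpair
          apply hy
          have hwmem : w₀ ∈ ({x.val, y.val} : Finset V) := by
            rw [hpair]; exact Finset.mem_insert_of_mem (Finset.mem_singleton_self _)
          rcases Finset.mem_insert.mp hwmem with h1 | h1
          · rw [hxu] at h1; exact absurd h1.symm huw
          · exact Subtype.ext (Finset.mem_singleton.mp h1).symm
        · intro habs; exact absurd (Finset.mem_univ _) habs
      rw [hone, hxu, if_pos rfl, hsymm u₀ v₀, hγdef, div_mul_eq_mul_div, div_eq_iff hsum]
      linear_combination (c v₀ u₀) * hharm_v₀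
    · by_cases hxw : x.val = w₀
      · have hone : (∑ y : {v : V // v ≠ v₀},
            (if ({x.val, y.val} : Finset V) = {u₀, w₀} then γ else 0) * (h x.val - h y.val))
            = (if ({x.val, u₀} : Finset V) = {u₀, w₀} then γ else 0) * (h x.val - h u₀) := by
          refine Finset.sum_eq_single (⟨u₀, hu₀⟩ : {v : V // v ≠ v₀}) ?_ ?_
          · intro y _ hy
            rw [if_neg, zero_mul]
            intro hpair
            apply hy
            have humem : u₀ ∈ ({x.val, y.val} : Finset V) := by
              rw [hpair]; exact Finset.mem_insert_self _ _
            rcases Finset.mem_insert.mp humem with h1 | h1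
            · rw [hxw] at h1; exact absurd h1 huw
            · exact Subtype.ext (Finset.mem_singleton.mp h1).symm
          · intro habs; exact absurd (Finset.mem_univ _) habs
        rw [hone, hxw, if_pos (Finset.pair_comm w₀ u₀), hsymm w₀ v₀, hγdef,
          div_mul_eq_mul_div, div_eq_iff hsum]
        linear_combination (c v₀ w₀) * hharm_v₀
      · have h0 : (∑ y : {v : V // v ≠ v₀},
            (if ({x.val, y.val} : Finset V) = {u₀, w₀} then γ else 0) * (h x.val - h y.val))
            = 0 := by
          refine Finset.sum_eq_zero fun y _ => ?_
          rw [if_neg, zero_mul]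
          intro hpair
          have hxmem : x.val ∈ ({u₀, w₀} : Finset V) := by
            rw [← hpair]; exact Finset.mem_insert_self _ _
          rcases Finset.mem_insert.mp hxmem with h1 | h1
          · exact hxu h1
          · exact hxw (Finset.mem_singleton.mp h1)
        have hcx : c x.val v₀ = 0 := by
          rw [hsymm]
          by_contra hcc
          rcases hnbr x.val hcc with h1 | h1
          · exact hxu h1
          · exact hxw h1
        rw [h0, hcx, zero_mul]
  have hharm' : ∀ x : {v : V // v ≠ v₀}, x ∉ N' → (netLap c' *ᵥ h') x = 0 := by
    intro x hx
    rw [htrans x]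
    exact hharm x.val fun hmem => hx (Finset.mem_subtype.mpr hmem)
  have hres' : (fun k : {x : {v : V // v ≠ v₀} // x ∈ N'} => h' k.val)
      = Pi.single (⟨⟨j.val, fun hh => hv₀ (hh ▸ j.property)⟩,
          Finset.mem_subtype.mpr j.property⟩ : {x : {v : V // v ≠ v₀} // x ∈ N'}) 1 := by
    funext k
    have hkN : k.val.val ∈ N := Finset.mem_subtype.mp k.prop
    have hk1 : h' k.val = f ⟨k.val.val, hkN⟩ := hres ⟨k.val.val, hkN⟩
    rw [hk1, hfdef]
    simp only [Pi.single_apply]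
    have hiff : ((⟨k.val.val, hkN⟩ : {v : V // v ∈ N}) = j)
        ↔ (k = ⟨⟨j.val, fun hh => hv₀ (hh ▸ j.property)⟩,
            Finset.mem_subtype.mpr j.property⟩) := by
      constructor
      · intro he
        have h1 : k.val.val = j.val := congrArg Subtype.val he
        apply Subtype.ext
        apply Subtype.ext
        exact h1
      · intro he
        exact Subtype.ext
          (congrArg (fun t : {x : {v : V // v ≠ v₀} // x ∈ N'} => t.val.val) he)
    exact if_congr hiff rfl rfl
  have e1 : respMat c N i j = -(netLap c *ᵥ h) i.val := by
    have hap := respMat_apply c N hsymm hdet h hharm i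
    rw [show (fun k : {v : V // v ∈ N} => h k.val) = f from funext hres] at hap
    rw [← hap, hfdef, Matrix.mulVec_single]
    simp
  have e2 : respMat c' N'
      ⟨⟨i.val, fun hh => hv₀ (hh ▸ i.property)⟩, Finset.mem_subtype.mpr i.property⟩
      ⟨⟨j.val, fun hh => hv₀ (hh ▸ j.property)⟩, Finset.mem_subtype.mpr j.property⟩
      = -(netLap c' *ᵥ h') ⟨i.val, fun hh => hv₀ (hh ▸ i.property)⟩ := by
    have hap := respMat_apply c' N' hsym' hdet' h' hharm'
      ⟨⟨i.val, fun hh => hv₀ (hh ▸ i.property)⟩, Finset.mem_subtype.mpr i.property⟩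
    rw [hres'] at hap
    rw [← hap, Matrix.mulVec_single]
    simp
  rw [e1, e2, htrans ⟨i.val, fun hh => hv₀ (hh ▸ i.property)⟩]
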